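/- If a preorder R on processes is a probabilistic bisimulation, then its lifting R̂ to distributions is a probabilistic bisimulation on distributions (i.e., for each (Δ, Θ) ∈ R̂, Δ ⟹ Δ' implies Θ ⟹ Θ' with (Δ', Θ') ∈ R̂, and symmetrically Θ ⟹ Θ' implies Δ ⟹ Δ' with (Δ', Θ') ∈ R̂). -/

import Mathlib

open BigOperators Finsupp

/-- Finitely supported (sub)distributions on `α`. -/
abbrev PDist (α : Type) := α →₀ NNReal

/-- Point distribution. -/
noncomputable def delta {α : Type} (a : α) : PDist α := Finsupp.single a 1

/-- Lifting of a relation on processes to probability distributions: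
`(Δ, Θ) ∈ R̂` iff `Δ = Σ_i p_i·δ(P_i)`, `Θ = Σ_i p_i·δ(Q_i)` for a finite index
set with `Σ p_i = 1` and `R (P i) (Q i)` for all `i`. -/
def Lift {α : Type} (R : α → α → Prop) (Δ Θ : PDist α) : Prop :=
  ∃ (n : ℕ) (p : Fin n → NNReal) (P Q : Fin n → α),
    (∑ i, p i) = 1 ∧
    Δ = ∑ i, p i • delta (P i) ∧
    Θ = ∑ i, p i • delta (Q i) ∧
    ∀ i, R (P i) (Q i)

/-- One reduction step lifted to distributions (Definition of reductions of
distributions): `Δ ⟶ Θ` when `Δ = Σ_i p_i·δ(P_i)`, for each `i` either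
`P_i ⟶ Θ_i` or `Θ_i = δ(P_i)`, some `i` makes a step, and `Θ = Σ_i p_i·Θ_i`. -/
def DStep {α : Type} (step : α → PDist α → Prop) (Δ Θ : PDist α) : Prop :=
  ∃ (n : ℕ) (p : Fin n → NNReal) (P : Fin n → α) (Θi : Fin n → PDist α),
    (∑ i, p i) = 1 ∧
    Δ = ∑ i, p i • delta (P i) ∧
    (∀ i, step (P i) (Θi i) ∨ Θi i = delta (P i)) ∧
    (∃ i, step (P i) (Θi i)) ∧
    Θ = ∑ i, p i • Θi i

/-- Many-step reduction `⟹` on distributions. -/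
def MStep {α : Type} (step : α → PDist α → Prop) : PDist α → PDist α → Prop :=
  Relation.ReflTransGen (DStep step)

/-- Probabilistic (reduction) bisimulation on processes. -/
def PBisim {α : Type} (step : α → PDist α → Prop) (R : α → α → Prop) : Prop :=
  ∀ P Q, R P Q →
    (∀ Δ, MStep step (delta P) Δ → ∃ Θ, MStep step (delta Q) Θ ∧ Lift R Δ Θ) ∧
    (∀ Θ, MStep step (delta Q) Θ → ∃ Δ, MStep step (delta P) Δ ∧ Lift R Δ Θ)

/-- Probabilistic bisimulation on distributions. -/
def DBisim {α : Type} (step : α → PDist α → Prop)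
    (S : PDist α → PDist α → Prop) : Prop :=
  ∀ Δ Θ, S Δ Θ →
    (∀ Δ', MStep step Δ Δ' → ∃ Θ', MStep step Θ Θ' ∧ S Δ' Θ') ∧
    (∀ Θ', MStep step Θ Θ' → ∃ Δ', MStep step Δ Δ' ∧ S Δ' Θ')

namespace Pb
variable {α : Type} {step : α → PDist α → Prop} {R : α → α → Prop}

lemma dstep_of_fintype {ι : Type} [Fintype ι] (p : ι → NNReal) (P : ι → α)
    (Θi : ι → PDist α) {Δ Θ : PDist α}
    (h1 : ∑ i, p i = 1) (h2 : Δ = ∑ i, p i • delta (P i))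
    (h3 : ∀ i, step (P i) (Θi i) ∨ Θi i = delta (P i))
    (h4 : ∃ i, step (P i) (Θi i)) (h5 : Θ = ∑ i, p i • Θi i) :
    DStep step Δ Θ := by
  classical
  obtain ⟨i0, hi0⟩ := h4
  let e : Fin (Fintype.card ι) ≃ ι := (Fintype.equivFin ι).symm
  refine ⟨Fintype.card ι, p ∘ e, P ∘ e, Θi ∘ e, ?_, ?_, ?_, ⟨e.symm i0, ?_⟩, ?_⟩
  · rw [← h1]; exact Equiv.sum_comp e p
  · rw [h2]; exact (Equiv.sum_comp e (fun i => p i • delta (P i))).symm ▸ rfl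
  · intro k; exact h3 (e k)
  · simpa using hi0
  · rw [h5]; exact (Equiv.sum_comp e (fun i => p i • Θi i)).symm ▸ rfl

lemma lift_of_fintype {ι : Type} [Fintype ι] (p : ι → NNReal) (P Q : ι → α)
    {Δ Θ : PDist α}
    (h1 : ∑ i, p i = 1) (h2 : Δ = ∑ i, p i • delta (P i))
    (h3 : Θ = ∑ i, p i • delta (Q i)) (h4 : ∀ i, R (P i) (Q i)) :
    Lift R Δ Θ := by
  classical
  let e : Fin (Fintype.card ι) ≃ ι := (Fintype.equivFin ι).symm
  refine ⟨Fintype.card ι, p ∘ e, P ∘ e, Q ∘ e, ?_, ?_, ?_, fun k => h4 (e k)⟩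
  · rw [← h1]; exact Equiv.sum_comp e p
  · rw [h2]; exact (Equiv.sum_comp e (fun i => p i • delta (P i))).symm ▸ rfl
  · rw [h3]; exact (Equiv.sum_comp e (fun i => p i • delta (Q i))).symm ▸ rfl
noncomputable def mass (Δ : PDist α) : NNReal := ∑ a ∈ Δ.support, Δ a

lemma mass_eq_sum (Δ : PDist α) : mass Δ = Δ.sum fun _ v => v := rfl

lemma mass_delta (a : α) : mass (delta a) = 1 := by
  rw [mass_eq_sum, delta, Finsupp.sum_single_index]; rfl

lemma mass_smul (c : NNReal) (Δ : PDist α) : mass (c • Δ) = c * mass Δ := by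
  rw [mass_eq_sum, mass_eq_sum, Finsupp.sum_smul_index (fun a => rfl), Finsupp.mul_sum]


lemma mass_add (Δ E : PDist α) : mass (Δ + E) = mass Δ + mass E := by
  classical
  rw [mass_eq_sum, mass_eq_sum, mass_eq_sum, Finsupp.sum_add_index] <;> simp

lemma mass_zero : mass (0 : PDist α) = 0 := by simp [mass_eq_sum]

lemma mass_sum {ι : Type*} (s : Finset ι) (f : ι → PDist α) :
    mass (∑ i ∈ s, f i) = ∑ i ∈ s, mass (f i) := by
  classical
  induction s using Finset.induction_on with
  | empty => simp [mass_zero]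
  | insert _ _ h ih => rw [Finset.sum_insert h, Finset.sum_insert h, mass_add, ih]

lemma support_decomp (Δ : PDist α) : Δ = ∑ a ∈ Δ.support, Δ a • delta a := by
  conv_lhs => rw [← Finsupp.sum_single Δ]
  rw [Finsupp.sum]
  congr 1; ext a
  rw [delta, Finsupp.smul_single, smul_eq_mul, mul_one]

lemma delta_ne_zero (a : α) : delta a ≠ 0 := by
  intro h
  have := mass_delta a
  rw [h, mass_zero] at this
  exact one_ne_zero this.symm


lemma pdist_apply_of_decomp {ι : Type} [Fintype ι] {Δ : PDist α} {p : ι → NNReal}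
    {Δi : ι → PDist α} (h : Δ = ∑ i, p i • Δi i) (a : α) :
    Δ a = ∑ i, p i * Δi i a := by
  rw [h, Finsupp.finset_sum_apply]
  simp [Finsupp.smul_apply]

lemma ctx_dstep {A A' : PDist α} (h : DStep step A A') (c : NNReal) (C : PDist α)
    (hc : c + mass C = 1) : DStep step (c • A + C) (c • A' + C) := by
  classical
  obtain ⟨m, q, Pj, θ, hq, hA, hso, hex, hA'⟩ := h
  refine dstep_of_fintype (ι := Fin m ⊕ {a // a ∈ C.support})
    (Sum.elim (fun j => c * q j) (fun a => C a.1))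
    (Sum.elim Pj (fun a => a.1))
    (Sum.elim θ (fun a => delta a.1)) ?_ ?_ ?_ ?_ ?_
  · rw [Fintype.sum_sum_type]
    simp only [Sum.elim_inl, Sum.elim_inr]
    rw [← Finset.mul_sum, hq, mul_one, Finset.sum_coe_sort C.support (fun a => C a)]
    exact hc
  · rw [Fintype.sum_sum_type]
    simp only [Sum.elim_inl, Sum.elim_inr]
    congr 1
    · rw [hA, Finset.smul_sum]
      congr 1; ext j; rw [smul_smul]
    · rw [Finset.sum_coe_sort C.support (fun a => C a • delta a)]
      exact support_decomp C
  · rintro (j | a)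
    · exact hso j
    · right; rfl
  · obtain ⟨j, hj⟩ := hex; exact ⟨Sum.inl j, hj⟩
  · rw [Fintype.sum_sum_type]
    simp only [Sum.elim_inl, Sum.elim_inr]
    congr 1
    · rw [hA', Finset.smul_sum]
      congr 1; ext j; rw [smul_smul]
    · rw [Finset.sum_coe_sort C.support (fun a => C a • delta a)]
      exact support_decomp C

lemma ctx_mstep {A A' : PDist α} (h : MStep step A A') (c : NNReal) (C : PDist α)
    (hc : c + mass C = 1) : MStep step (c • A + C) (c • A' + C) := by
  induction h with
  | refl => exact Relation.ReflTransGen.refl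
  | tail _ hd ih => exact ih.tail (ctx_dstep hd c C hc)

lemma dstep_mass (hm : ∀ P θ, step P θ → mass θ = 1) {Δ Θ : PDist α}
    (h : DStep step Δ Θ) : mass Θ = 1 := by
  obtain ⟨m, q, Pj, θ, hq, hΔ, hso, hex, hΘ⟩ := h
  rw [hΘ, mass_sum]
  rw [← hq]
  congr 1; ext j
  rw [mass_smul]
  rcases hso j with hs | hs
  · rw [hm _ _ hs, mul_one]
  · rw [hs, mass_delta, mul_one]

lemma mstep_mass (hm : ∀ P θ, step P θ → mass θ = 1) {Δ Θ : PDist α}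
    (h : MStep step Δ Θ) (hΔ : mass Δ = 1) : mass Θ = 1 := by
  induction h with
  | refl => exact hΔ
  | tail _ hd _ => exact dstep_mass hm hd

lemma mstep_combine {ι : Type} [Fintype ι] (hm : ∀ P θ, step P θ → mass θ = 1)
    (p : ι → NNReal) (Δi Θi : ι → PDist α)
    (hp : ∑ i, p i = 1) (hΔm : ∀ i, mass (Δi i) = 1)
    (hst : ∀ i, MStep step (Δi i) (Θi i)) :
    MStep step (∑ i, p i • Δi i) (∑ i, p i • Θi i) := by
  classical
  suffices h : ∀ s : Finset ι,
      MStep step (∑ i, p i • Δi i) (∑ i, p i • (if i ∈ s then Θi i else Δi i)) by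
    have := h Finset.univ
    simpa using this
  intro s
  induction s using Finset.induction_on with
  | empty => simpa [MStep] using (Relation.ReflTransGen.refl : MStep step _ _)
  | @insert k s hk ih =>
    refine ih.trans ?_
    have hgmass : ∀ i, mass (if i ∈ s then Θi i else Δi i) = 1 := by
      intro i
      by_cases h : i ∈ s
      · simp only [h, if_true]; exact mstep_mass hm (hst i) (hΔm i)
      · simp only [h, if_false]; exact hΔm i
    have e1 : ∑ i, p i • (if i ∈ s then Θi i else Δi i)
        = p k • Δi k + ∑ i ∈ Finset.univ.erase k,
            p i • (if i ∈ s then Θi i else Δi i) := by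
      rw [← Finset.add_sum_erase _ _ (Finset.mem_univ k), if_neg hk]
    have e2 : ∑ i, p i • (if i ∈ insert k s then Θi i else Δi i)
        = p k • Θi k + ∑ i ∈ Finset.univ.erase k,
            p i • (if i ∈ s then Θi i else Δi i) := by
      rw [← Finset.add_sum_erase _ _ (Finset.mem_univ k),
        if_pos (Finset.mem_insert_self k s)]
      congr 1
      refine Finset.sum_congr rfl fun i hi => ?_
      rw [Finset.mem_erase] at hi
      simp [Finset.mem_insert, hi.1]
    rw [e1, e2]
    refine ctx_mstep (hst k) (p k) _ ?_
    rw [mass_sum]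
    have : ∀ i ∈ Finset.univ.erase k,
        mass (p i • (if i ∈ s then Θi i else Δi i)) = p i := by
      intro i _
      rw [mass_smul, hgmass, mul_one]
    rw [Finset.sum_congr rfl this, Finset.add_sum_erase _ _ (Finset.mem_univ k), hp]


lemma atom_decomp (hm : ∀ P θ, step P θ → mass θ = 1) {Δ Θ : PDist α}
    (h : DStep step Δ Θ) :
    ∃ Θf : α → PDist α,
      (∀ a, DStep step (delta a) (Θf a) ∨ Θf a = delta a) ∧
      (∀ a, mass (Θf a) = 1) ∧
      ∑ a ∈ Δ.support, Δ a • Θf a = Θ := by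
  classical
  obtain ⟨m, q, Pj, θ, hq, hΔ, hso, hex, hΘ⟩ := h
  set J : α → Finset (Fin m) := fun a => Finset.univ.filter (fun j => Pj j = a) with hJ
  have hΔa : ∀ a, Δ a = ∑ j ∈ J a, q j := by
    intro a
    rw [pdist_apply_of_decomp hΔ a, hJ, Finset.sum_filter]
    refine Finset.sum_congr rfl fun j _ => ?_
    rw [delta, Finsupp.single_apply]
    split <;> simp
  set Θf : α → PDist α := fun a =>
    if h : Δ a ≠ 0 ∧ ∃ j ∈ J a, step (Pj j) (θ j)
    then (Δ a)⁻¹ • ∑ j ∈ J a, q j • θ j else delta a with hΘf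
  have hfpos : ∀ a, (Δ a ≠ 0 ∧ ∃ j ∈ J a, step (Pj j) (θ j)) →
      Θf a = (Δ a)⁻¹ • ∑ j ∈ J a, q j • θ j := by
    intro a hc; rw [hΘf]; exact dif_pos hc
  have hfneg : ∀ a, ¬(Δ a ≠ 0 ∧ ∃ j ∈ J a, step (Pj j) (θ j)) → Θf a = delta a := by
    intro a hc; rw [hΘf]; exact dif_neg hc
  have hkey : ∀ a, Δ a • Θf a = ∑ j ∈ J a, q j • θ j := by
    intro a
    by_cases hc : Δ a ≠ 0 ∧ ∃ j ∈ J a, step (Pj j) (θ j)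
    · rw [hfpos a hc, smul_smul, mul_inv_cancel₀ hc.1, one_smul]
    · rw [hfneg a hc]
      push_neg at hc
      by_cases h0 : Δ a = 0
      · rw [h0, zero_smul]
        refine (Finset.sum_eq_zero fun j hj => ?_).symm
        have hsum : ∑ j ∈ J a, q j = 0 := (hΔa a) ▸ h0
        rw [Finset.sum_eq_zero_iff.mp hsum j hj, zero_smul]
      · have hall : ∀ j ∈ J a, θ j = delta a := by
          intro j hj
          have hPa : Pj j = a := (Finset.mem_filter.mp hj).2
          rcases hso j with hs | hs
          · exact absurd hs (hPa ▸ hc h0 j hj)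
          · rw [hs, hPa]
        rw [Finset.sum_congr rfl fun j hj => by rw [hall j hj], ← Finset.sum_smul,
          ← hΔa a]
  have hor : ∀ a, DStep step (delta a) (Θf a) ∨ Θf a = delta a := by
    intro a
    by_cases hc : Δ a ≠ 0 ∧ ∃ j ∈ J a, step (Pj j) (θ j)
    · left
      obtain ⟨hne, j0, hj0, hj0s⟩ := hc
      have hsum1 : ∑ j : {j // j ∈ J a}, (Δ a)⁻¹ * q j.1 = 1 := by
        rw [Finset.sum_coe_sort (J a) (fun j => (Δ a)⁻¹ * q j), ← Finset.mul_sum,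
          ← hΔa a, inv_mul_cancel₀ hne]
      refine dstep_of_fintype (ι := {j // j ∈ J a})
        (fun j => (Δ a)⁻¹ * q j.1) (fun _ => a) (fun j => θ j.1) hsum1 ?_ ?_ ?_ ?_
      · rw [← Finset.sum_smul, hsum1, one_smul]
      · rintro ⟨j, hj⟩
        have hPa : Pj j = a := (Finset.mem_filter.mp hj).2
        show step a (θ j) ∨ θ j = delta a
        rw [← hPa]
        exact hso j
      · refine ⟨⟨j0, hj0⟩, ?_⟩
        have hPa : Pj j0 = a := (Finset.mem_filter.mp hj0).2
        show step a (θ j0)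
        rw [← hPa]
        exact hj0s
      · rw [hfpos a ⟨hne, j0, hj0, hj0s⟩, Finset.smul_sum,
          ← Finset.sum_coe_sort (J a) (fun j => (Δ a)⁻¹ • (q j • θ j))]
        refine Finset.sum_congr rfl fun j _ => ?_
        rw [smul_smul]
    · right
      exact hfneg a hc
  have hmassf : ∀ a, mass (Θf a) = 1 := by
    intro a
    by_cases hc : Δ a ≠ 0 ∧ ∃ j ∈ J a, step (Pj j) (θ j)
    · rw [hfpos a hc, mass_smul, mass_sum]
      have : ∀ j ∈ J a, mass (q j • θ j) = q j := by
        intro j hj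
        rw [mass_smul]
        rcases hso j with hs | hs
        · rw [hm _ _ hs, mul_one]
        · rw [hs, mass_delta, mul_one]
      rw [Finset.sum_congr rfl this, ← hΔa a, inv_mul_cancel₀ hc.1]
    · rw [hfneg a hc, mass_delta]
  refine ⟨Θf, hor, hmassf, ?_⟩
  set s : Finset (Fin m) := Finset.univ.filter (fun j => Pj j ∈ Δ.support) with hs
  have hfib : ∀ a ∈ Δ.support, J a = s.filter (fun j => Pj j = a) := by
    intro a ha
    ext j
    simp only [hJ, hs, Finset.mem_filter, Finset.mem_univ, true_and]
    constructor
    · intro hj; exact ⟨hj ▸ ha, hj⟩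
    · intro hj; exact hj.2
  calc ∑ a ∈ Δ.support, Δ a • Θf a
      = ∑ a ∈ Δ.support, ∑ j ∈ s.filter (fun j => Pj j = a), q j • θ j := by
        refine Finset.sum_congr rfl fun a ha => ?_
        rw [hkey a, hfib a ha]
    _ = ∑ j ∈ s, q j • θ j :=
        Finset.sum_fiberwise_of_maps_to (fun j hj => (Finset.mem_filter.mp hj).2) _
    _ = ∑ j, q j • θ j := by
        refine Finset.sum_subset (Finset.subset_univ s) fun j _ hj => ?_
        have hns : Pj j ∉ Δ.support := by
          intro hmem
          exact hj (Finset.mem_filter.mpr ⟨Finset.mem_univ j, hmem⟩)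
        have h0 : Δ (Pj j) = 0 := Finsupp.notMem_support_iff.mp hns
        have hj0 : q j = 0 := by
          have hsum : ∑ j' ∈ J (Pj j), q j' = 0 := (hΔa (Pj j)) ▸ h0
          refine Finset.sum_eq_zero_iff.mp hsum j ?_
          simp [hJ]
        rw [hj0, zero_smul]
    _ = Θ := hΘ.symm


lemma dstep_decomp {n : ℕ} (hm : ∀ P θ, step P θ → mass θ = 1) {Δ Θ : PDist α}
    (h : DStep step Δ Θ) (p : Fin n → NNReal) (Δi : Fin n → PDist α)
    (hΔ : Δ = ∑ i, p i • Δi i) (hΔm : ∀ i, mass (Δi i) = 1) :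
    ∃ Θi : Fin n → PDist α, (∀ i, MStep step (Δi i) (Θi i)) ∧
      (∀ i, mass (Θi i) = 1) ∧ Θ = ∑ i, p i • Θi i := by
  classical
  obtain ⟨Θf, hor, hmf, hsum⟩ := atom_decomp hm h
  refine ⟨fun i => ∑ a ∈ (Δi i).support, (Δi i) a • Θf a, ?_, ?_, ?_⟩
  · intro i
    have hc := mstep_combine (ι := {a // a ∈ (Δi i).support}) hm
      (fun a => (Δi i) a.1) (fun a => delta a.1) (fun a => Θf a.1)
      (by rw [Finset.sum_coe_sort ((Δi i).support) (fun a => (Δi i) a)]; exact hΔm i)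
      (fun a => mass_delta a.1)
      (fun a => by
        show MStep step (delta a.1) (Θf a.1)
        rcases hor a.1 with hd | he
        · exact Relation.ReflTransGen.single hd
        · rw [he]
          exact Relation.ReflTransGen.refl)
    rw [Finset.sum_coe_sort ((Δi i).support) (fun a => (Δi i) a • delta a),
        Finset.sum_coe_sort ((Δi i).support) (fun a => (Δi i) a • Θf a)] at hc
    rwa [← support_decomp (Δi i)] at hc
  · intro i
    rw [mass_sum]
    have : ∀ a ∈ (Δi i).support, mass ((Δi i) a • Θf a) = (Δi i) a := by
      intro a _
      rw [mass_smul, hmf, mul_one]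
    rw [Finset.sum_congr rfl this]
    exact hΔm i
  · set S : Finset α := Δ.support ∪ Finset.univ.biUnion (fun i => (Δi i).support)
      with hS
    have hsub1 : Δ.support ⊆ S := Finset.subset_union_left
    have hsub2 : ∀ i, (Δi i).support ⊆ S := fun i =>
      (Finset.subset_biUnion_of_mem (fun i => (Δi i).support)
        (Finset.mem_univ i)).trans Finset.subset_union_right
    have e1 : ∀ i, ∑ a ∈ (Δi i).support, (Δi i) a • Θf a
        = ∑ a ∈ S, (Δi i) a • Θf a := fun i =>
      Finset.sum_subset (hsub2 i) (fun a _ ha => by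
        rw [Finsupp.notMem_support_iff.mp ha, zero_smul])
    calc Θ = ∑ a ∈ Δ.support, Δ a • Θf a := hsum.symm
      _ = ∑ a ∈ S, Δ a • Θf a :=
          Finset.sum_subset hsub1 (fun a _ ha => by
            rw [Finsupp.notMem_support_iff.mp ha, zero_smul])
      _ = ∑ a ∈ S, (∑ i, p i * (Δi i) a) • Θf a := by
          refine Finset.sum_congr rfl fun a _ => ?_
          rw [← pdist_apply_of_decomp hΔ a]
      _ = ∑ a ∈ S, ∑ i, (p i * (Δi i) a) • Θf a := by
          refine Finset.sum_congr rfl fun a _ => ?_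
          rw [Finset.sum_smul]
      _ = ∑ i, ∑ a ∈ S, (p i * (Δi i) a) • Θf a := Finset.sum_comm
      _ = ∑ i, p i • ∑ a ∈ S, (Δi i) a • Θf a := by
          refine Finset.sum_congr rfl fun i _ => ?_
          rw [Finset.smul_sum]
          refine Finset.sum_congr rfl fun a _ => ?_
          rw [smul_smul]
      _ = ∑ i, p i • ∑ a ∈ (Δi i).support, (Δi i) a • Θf a := by
          refine Finset.sum_congr rfl fun i _ => ?_
          rw [← e1 i]

lemma mstep_decomp {n : ℕ} (hm : ∀ P θ, step P θ → mass θ = 1) {Δ Θ : PDist α}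
    (h : MStep step Δ Θ) (p : Fin n → NNReal) (Δi : Fin n → PDist α)
    (hΔ : Δ = ∑ i, p i • Δi i) (hΔm : ∀ i, mass (Δi i) = 1) :
    ∃ Θi : Fin n → PDist α, (∀ i, MStep step (Δi i) (Θi i)) ∧
      (∀ i, mass (Θi i) = 1) ∧ Θ = ∑ i, p i • Θi i := by
  have main := Relation.ReflTransGen.head_induction_on
    (motive := fun (Δ' : PDist α) (_ : Relation.ReflTransGen (DStep step) Δ' Θ) =>
      ∀ Δi : Fin n → PDist α, Δ' = ∑ i, p i • Δi i → (∀ i, mass (Δi i) = 1) →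
        ∃ Θi : Fin n → PDist α, (∀ i, MStep step (Δi i) (Θi i)) ∧
          (∀ i, mass (Θi i) = 1) ∧ Θ = ∑ i, p i • Θi i)
    h
    (fun Δi hΔ hΔm => ⟨Δi, fun _ => Relation.ReflTransGen.refl, hΔm, hΔ⟩)
    (fun {Δ' Δ₁} hd _ ih Δi hΔ hΔm => by
      obtain ⟨Δ₁i, h1, h1m, hΔ₁⟩ := dstep_decomp hm hd p Δi hΔ hΔm
      obtain ⟨Θi, h2, h2m, hΘ⟩ := ih Δ₁i hΔ₁ h1m
      exact ⟨Θi, fun i => (h1 i).trans (h2 i), h2m, hΘ⟩)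
  exact main Δi hΔ hΔm

lemma step_target_mass (hrefl : Reflexive R) (hbis : PBisim step R) :
    ∀ P θ, step P θ → mass θ = 1 := by
  intro P θ hs
  have hd : DStep step (delta P) θ := by
    refine ⟨1, fun _ => 1, fun _ => P, fun _ => θ, ?_, ?_, fun _ => Or.inl hs,
      ⟨0, hs⟩, ?_⟩
    · rw [Fin.sum_univ_one]
    · rw [Fin.sum_univ_one, one_smul]
    · rw [Fin.sum_univ_one, one_smul]
  obtain ⟨Θ', _, hlift⟩ := (hbis P P (hrefl P)).1 θ (Relation.ReflTransGen.single hd)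
  obtain ⟨n, p, Pf, Qf, hp, hθ, _, _⟩ := hlift
  rw [hθ, mass_sum, ← hp]
  refine Finset.sum_congr rfl fun i _ => ?_
  rw [mass_smul, mass_delta, mul_one]

lemma lift_combine {n : ℕ} (p : Fin n → NNReal) (Δi Θi : Fin n → PDist α)
    (hp : ∑ i, p i = 1) (hl : ∀ i, Lift R (Δi i) (Θi i)) :
    Lift R (∑ i, p i • Δi i) (∑ i, p i • Θi i) := by
  classical
  choose m q Pf Qf hq hΔ hΘ hR using hl
  refine lift_of_fintype (ι := Σ i : Fin n, Fin (m i))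
    (fun x => p x.1 * q x.1 x.2) (fun x => Pf x.1 x.2) (fun x => Qf x.1 x.2)
    ?_ ?_ ?_ (fun x => hR x.1 x.2)
  · rw [← Finset.univ_sigma_univ, Finset.sum_sigma]
    rw [← hp]
    refine Finset.sum_congr rfl fun i _ => ?_
    show ∑ j : Fin (m i), p i * q i j = p i
    rw [← Finset.mul_sum, hq i, mul_one]
  · rw [← Finset.univ_sigma_univ, Finset.sum_sigma]
    refine Finset.sum_congr rfl fun i _ => ?_
    show p i • Δi i = ∑ j : Fin (m i), (p i * q i j) • delta (Pf i j)
    rw [hΔ i, Finset.smul_sum]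
    refine Finset.sum_congr rfl fun j _ => ?_
    rw [smul_smul]
  · rw [← Finset.univ_sigma_univ, Finset.sum_sigma]
    refine Finset.sum_congr rfl fun i _ => ?_
    show p i • Θi i = ∑ j : Fin (m i), (p i * q i j) • delta (Qf i j)
    rw [hΘ i, Finset.smul_sum]
    refine Finset.sum_congr rfl fun j _ => ?_
    rw [smul_smul]

end Pb

/-- If a preorder `R` on processes is a probabilistic bisimulation, then its
lifting `R̂` to distributions is a probabilistic bisimulation on distributions. -/
theorem lift_pbisim {α : Type} (step : α → PDist α → Prop) (R : α → α → Prop)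
    (hrefl : Reflexive R) (htrans : Transitive R)
    (hbis : PBisim step R) : DBisim step (Lift R) := by
  have hm := Pb.step_target_mass hrefl hbis
  intro Δ Θ hlift
  obtain ⟨n, p, P, Q, hp, hΔ, hΘ, hR⟩ := hlift
  constructor
  · intro Δ' hΔ'
    obtain ⟨Δ'i, hms, hmass, hΔ'eq⟩ := Pb.mstep_decomp hm hΔ' p
      (fun i => delta (P i)) hΔ (fun i => Pb.mass_delta _)
    choose Θ'i hQms hlifts using fun i => (hbis (P i) (Q i) (hR i)).1 (Δ'i i) (hms i)
    refine ⟨∑ i, p i • Θ'i i, ?_, ?_⟩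
    · rw [hΘ]
      exact Pb.mstep_combine hm p _ _ hp (fun i => Pb.mass_delta _) hQms
    · rw [hΔ'eq]
      exact Pb.lift_combine p _ _ hp hlifts
  · intro Θ' hΘ'
    obtain ⟨Θ'i, hms, hmass, hΘ'eq⟩ := Pb.mstep_decomp hm hΘ' p
      (fun i => delta (Q i)) hΘ (fun i => Pb.mass_delta _)
    choose Δ'i hPms hlifts using fun i => (hbis (P i) (Q i) (hR i)).2 (Θ'i i) (hms i)
    refine ⟨∑ i, p i • Δ'i i, ?_, ?_⟩
    · rw [hΔ]
      exact Pb.mstep_combine hm p _ _ hp (fun i => Pb.mass_delta _) hPms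
    · rw [hΘ'eq]
      exact Pb.lift_combine p _ _ hp hlifts
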